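/- arXiv:0807.1359 — 2 statements merged into one kernel-verified Lean document; each statement's English description precedes it below -/
import Mathlib

section
/- Let A : ℝ → ℝ be nondecreasing and Lipschitz continuous with Lipschitz constant L_A ≥ 0, let Δt, Δx > 0, set μ = Δt/Δx², and assume 4μ·L_A ≤ 1. Then for all real numbers c, e, w, n, s, the pure diffusion update H₀(c, e, w, n, s) = c + μ(A(e) + A(w) + A(n) + A(s) − 4A(c)) satisfies min{c, e, w, n, s} ≤ H₀(c, e, w, n, s) ≤ max{c, e, w, n, s}. -/
/-- Discrete maximum principle: if `A` is nondecreasing and Lipschitz with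
constant `L_A`, and the CFL condition `4μ·L_A ≤ 1` holds with `μ = Δt/Δx²`,
then the pure diffusion update
`H₀(c,e,w,n,s) = c + μ(A(e) + A(w) + A(n) + A(s) - 4A(c))`
stays between the minimum and the maximum of its five arguments. -/
theorem fv_diffusion_max_principle (A : ℝ → ℝ) (LA Δt Δx : ℝ)
    (hA_mono : Monotone A) (hLA : 0 ≤ LA)
    (hA_lip : ∀ x y : ℝ, |A x - A y| ≤ LA * |x - y|)
    (hΔt : 0 < Δt) (hΔx : 0 < Δx)
    (hCFL : 4 * (Δt / Δx ^ 2) * LA ≤ 1) :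
    ∀ c e w n s : ℝ,
      min c (min e (min w (min n s))) ≤
          c + (Δt / Δx ^ 2) * (A e + A w + A n + A s - 4 * A c) ∧
      c + (Δt / Δx ^ 2) * (A e + A w + A n + A s - 4 * A c) ≤
          max c (max e (max w (max n s))) := by
  intro c e w n s
  set μ := Δt / Δx ^ 2 with hμdef
  have hμ : 0 ≤ μ := le_of_lt (div_pos hΔt (pow_pos hΔx 2))
  set M := max c (max e (max w (max n s))) with hM
  set m := min c (min e (min w (min n s))) with hm
  have hcM : c ≤ M := le_max_left _ _
  have heM : e ≤ M := le_trans (le_max_left _ _) (le_max_right _ _)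
  have hwM : w ≤ M := le_trans (le_trans (le_max_left _ _) (le_max_right _ _)) (le_max_right _ _)
  have hnM : n ≤ M := le_trans (le_trans (le_trans (le_max_left _ _) (le_max_right _ _)) (le_max_right _ _)) (le_max_right _ _)
  have hsM : s ≤ M := le_trans (le_trans (le_trans (le_max_right _ _) (le_max_right _ _)) (le_max_right _ _)) (le_max_right _ _)
  have hmc : m ≤ c := min_le_left _ _
  have hme : m ≤ e := le_trans (min_le_right _ _) (min_le_left _ _)
  have hmw : m ≤ w := le_trans (min_le_right _ _) (le_trans (min_le_right _ _) (min_le_left _ _))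
  have hmn : m ≤ n := le_trans (min_le_right _ _) (le_trans (min_le_right _ _) (le_trans (min_le_right _ _) (min_le_left _ _)))
  have hms : m ≤ s := le_trans (min_le_right _ _) (le_trans (min_le_right _ _) (le_trans (min_le_right _ _) (min_le_right _ _)))
  have hAeM : A e ≤ A M := hA_mono heM
  have hAwM : A w ≤ A M := hA_mono hwM
  have hAnM : A n ≤ A M := hA_mono hnM
  have hAsM : A s ≤ A M := hA_mono hsM
  have hAme : A m ≤ A e := hA_mono hme
  have hAmw : A m ≤ A w := hA_mono hmw
  have hAmn : A m ≤ A n := hA_mono hmn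
  have hAms : A m ≤ A s := hA_mono hms
  -- Lipschitz bounds
  have hlipM : A M - A c ≤ LA * (M - c) := by
    have := hA_lip M c
    rw [abs_of_nonneg (sub_nonneg.mpr hcM)] at this
    exact le_trans (le_abs_self _) this
  have hlipm : A c - A m ≤ LA * (c - m) := by
    have := hA_lip c m
    rw [abs_of_nonneg (sub_nonneg.mpr hmc)] at this
    exact le_trans (le_abs_self _) this
  constructor
  · -- lower bound
    have h1 : A e + A w + A n + A s - 4 * A c ≥ 4 * (A m - A c) := by linarith
    have h2 : μ * (4 * (A m - A c)) ≤ μ * (A e + A w + A n + A s - 4 * A c) :=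
      mul_le_mul_of_nonneg_left h1 hμ
    have h3 : μ * (4 * (A m - A c)) ≥ -(c - m) := by
      have h4 : μ * (A c - A m) ≤ μ * (LA * (c - m)) := mul_le_mul_of_nonneg_left hlipm hμ
      nlinarith [mul_nonneg hLA (sub_nonneg.mpr hmc)]
    linarith
  · have h1 : A e + A w + A n + A s - 4 * A c ≤ 4 * (A M - A c) := by linarith
    have h2 : μ * (A e + A w + A n + A s - 4 * A c) ≤ μ * (4 * (A M - A c)) :=
      mul_le_mul_of_nonneg_left h1 hμ
    have h3 : μ * (4 * (A M - A c)) ≤ M - c := by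
      have h4 : μ * (A M - A c) ≤ μ * (LA * (M - c)) := mul_le_mul_of_nonneg_left hlipM hμ
      nlinarith [mul_nonneg hLA (sub_nonneg.mpr hcM)]
    linarith
end

section
/- Let s be a positive natural number, γ̃₁, …, γ̃ₛ real numbers, and u : ℤ² → ℝ a set of fine-level cell values. Define the coarse values w : ℤ² → ℝ by the projection w_{i,j} = (1/4) Σ_{e₁,e₂∈{0,1}} u_{2i+e₁,2j+e₂}, define the predicted values ŵ_{2i+e₁,2j+e₂} from w by the prediction operator ŵ_{2i+e₁,2j+e₂} = w_{i,j} − (−1)^{e₁}Q_x(i,j) − (−1)^{e₂}Q_y(i,j) + (−1)^{e₁+e₂}Q_{xy}(i,j), and define the details d_{e₁,e₂}(i,j) = u_{2i+e₁,2j+e₂} − ŵ_{2i+e₁,2j+e₂}. Then for every (i,j) ∈ ℤ²: (a) d_{0,0}(i,j) + d_{0,1}(i,j) + d_{1,0}(i,j) + d_{1,1}(i,j) = 0; and (b) consequently each of the four fine values u_{2i+e₁,2j+e₂} is determined by the coarse values w and the three details d_{0,0}(i,j), d_{0,1}(i,j), d_{1,0}(i,j), via u_{2i+e₁,2j+e₂}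 = ŵ_{2i+e₁,2j+e₂} + d_{e₁,e₂}(i,j) with d_{1,1}(i,j) = −d_{0,0}(i,j) − d_{0,1}(i,j) − d_{1,0}(i,j). -/
/-- Knowledge of the four son cell averages is equivalent to knowledge of the
parent cell average plus three independent details: the four details sum to
zero, each fine value is the predicted value plus the corresponding detail,
and the fourth detail is determined by the other three. -/
theorem four_sons_equiv_parent_and_three_details (s : ℕ) (hs : 0 < s)
    (γ : ℕ → ℝ) (u : ℤ → ℤ → ℝ) (w : ℤ → ℤ → ℝ)
    (hw : ∀ i j : ℤ, w i j = (1 / 4 : ℝ) *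
      (u (2 * i) (2 * j) + u (2 * i) (2 * j + 1) +
        u (2 * i + 1) (2 * j) + u (2 * i + 1) (2 * j + 1)))
    (Qx Qy Qxy : ℤ → ℤ → ℝ)
    (hQx : ∀ i j : ℤ, Qx i j =
      ∑ n ∈ Finset.Icc 1 s, γ n * (w (i + (n : ℤ)) j - w (i - (n : ℤ)) j))
    (hQy : ∀ i j : ℤ, Qy i j =
      ∑ p ∈ Finset.Icc 1 s, γ p * (w i (j + (p : ℤ)) - w i (j - (p : ℤ))))
    (hQxy : ∀ i j : ℤ, Qxy i j =
      ∑ n ∈ Finset.Icc 1 s, γ n * ∑ p ∈ Finset.Icc 1 s, γ p *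
        (w (i + (n : ℤ)) (j + (p : ℤ)) - w (i + (n : ℤ)) (j - (p : ℤ)) -
          w (i - (n : ℤ)) (j + (p : ℤ)) + w (i - (n : ℤ)) (j - (p : ℤ))))
    (pred : ℤ → ℤ → ℕ → ℕ → ℝ)
    (hpred : ∀ (i j : ℤ) (e₁ e₂ : ℕ), pred i j e₁ e₂ =
      w i j - (-1 : ℝ) ^ e₁ * Qx i j - (-1 : ℝ) ^ e₂ * Qy i j +
        (-1 : ℝ) ^ (e₁ + e₂) * Qxy i j)
    (d : ℕ → ℕ → ℤ → ℤ → ℝ)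
    (hd : ∀ (e₁ e₂ : ℕ) (i j : ℤ), d e₁ e₂ i j =
      u (2 * i + (e₁ : ℤ)) (2 * j + (e₂ : ℤ)) - pred i j e₁ e₂) :
    ∀ i j : ℤ,
      (d 0 0 i j + d 0 1 i j + d 1 0 i j + d 1 1 i j = 0) ∧
      (∀ e₁ e₂ : ℕ, e₁ ≤ 1 → e₂ ≤ 1 →
        u (2 * i + (e₁ : ℤ)) (2 * j + (e₂ : ℤ)) = pred i j e₁ e₂ + d e₁ e₂ i j) ∧
      d 1 1 i j = -d 0 0 i j - d 0 1 i j - d 1 0 i j := by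
  intro i j
  have hsum : d 0 0 i j + d 0 1 i j + d 1 0 i j + d 1 1 i j = 0 := by
    simp only [hd, hpred, hw i j]
    push_cast
    ring_nf
  refine ⟨hsum, ?_, by linarith⟩
  intro e₁ e₂ _ _
  rw [hd]; ring
end
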